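/- Let k ≥ 1 and for each j = 1, …, k let (x_i(j))_{i ∈ ℕ} be a nondecreasing sequence with values in [0, ∞], and let (μ_i)_{i ∈ ℕ} be real numbers with 0 < μ_i for all i and ∑_i μ_i < ∞. Assume moreover that 0 < ∑_i x_i(j) μ_i < ∞ for every j = 1, …, k. Then equality (∑_i μ_i)^{k−1} · ∑_i (∏_{j=1}^k x_i(j)) μ_i = ∏_{j=1}^k ∑_i x_i(j) μ_i holds if and only if at least k − 1 of the sequences (x_i(j))_i are constant, i.e. there exists j₀ such that for every j ≠ j₀ the sequence (x_i(j))_i is constant. -/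

import Mathlib

open scoped ENNReal BigOperators

private lemma rearr_le {a b c d : ENNReal} (hab : a ≤ b) (hcd : c ≤ d) :
    a * d + b * c ≤ a * c + b * d := by
  obtain ⟨p, rfl⟩ := exists_add_of_le hab
  obtain ⟨q, rfl⟩ := exists_add_of_le hcd
  have h : a * c + (a + p) * (c + q) = (a * (c + q) + (a + p) * c) + p * q := by ring
  rw [h]; exact le_self_add

private lemma rearr_eq {a b c d : ENNReal} (hab : a ≤ b) (hcd : c ≤ d)
    (hb : b ≠ ∞) (hd : d ≠ ∞) (h : a * d + b * c = a * c + b * d) :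
    a = b ∨ c = d := by
  obtain ⟨p, rfl⟩ := exists_add_of_le hab
  obtain ⟨q, rfl⟩ := exists_add_of_le hcd
  have ha : a ≠ ∞ := fun h' => hb (by simp [h'])
  have hc : c ≠ ∞ := fun h' => hd (by simp [h'])
  have hp : p ≠ ∞ := fun h' => hb (by simp [h'])
  have hq : q ≠ ∞ := fun h' => hd (by simp [h'])
  have h2 : a * (c + q) + (a + p) * c + 0 = (a * (c + q) + (a + p) * c) + p * q := by
    conv_lhs => rw [add_zero, h]
    ring
  have hfin : a * (c + q) + (a + p) * c ≠ ∞ := by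
    finiteness
  have h3 : (0 : ENNReal) = p * q := by
    exact (ENNReal.add_right_inj hfin).mp h2
  rcases mul_eq_zero.mp h3.symm with h4 | h4
  · left; rw [h4, add_zero]
  · right; rw [h4, add_zero]

private lemma double_f (ν a b : ℕ → ENNReal) :
    (∑' i, (a i * b i) * ν i) * (∑' i, ν i) + (∑' i, ν i) * (∑' i, (a i * b i) * ν i)
      = ∑' p : ℕ × ℕ, (a p.1 * b p.1 + a p.2 * b p.2) * (ν p.1 * ν p.2) := by
  have h1 : ∀ p : ℕ × ℕ, (a p.1 * b p.1 + a p.2 * b p.2) * (ν p.1 * ν p.2)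
      = (a p.1 * b p.1 * ν p.1) * ν p.2 + ν p.1 * (a p.2 * b p.2 * ν p.2) := by
    intro p; ring
  rw [tsum_congr h1, ENNReal.tsum_add]
  congr 1
  · rw [ENNReal.tsum_prod (f := fun i i' => a i * b i * ν i * ν i')]
    symm
    calc ∑' (i : ℕ) (i' : ℕ), (a i * b i * ν i) * ν i'
        = ∑' (i : ℕ), (a i * b i * ν i) * ∑' i', ν i' := by
          exact tsum_congr fun i => ENNReal.tsum_mul_left
      _ = (∑' i, (a i * b i) * ν i) * (∑' i, ν i) := ENNReal.tsum_mul_right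
  · rw [ENNReal.tsum_prod (f := fun i i' => ν i * (a i' * b i' * ν i'))]
    symm
    calc ∑' (i : ℕ) (i' : ℕ), ν i * (a i' * b i' * ν i')
        = ∑' (i : ℕ), ν i * ∑' i', (a i' * b i') * ν i' := by
          exact tsum_congr fun i => ENNReal.tsum_mul_left
      _ = (∑' i, ν i) * (∑' i, (a i * b i) * ν i) := ENNReal.tsum_mul_right

private lemma double_g (ν a b : ℕ → ENNReal) :
    (∑' i, a i * ν i) * (∑' i, b i * ν i) + (∑' i, a i * ν i) * (∑' i, b i * ν i)
      = ∑' p : ℕ × ℕ, (a p.1 * b p.2 + a p.2 * b p.1) * (ν p.1 * ν p.2) := by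
  have h1 : ∀ p : ℕ × ℕ, (a p.1 * b p.2 + a p.2 * b p.1) * (ν p.1 * ν p.2)
      = (a p.1 * ν p.1) * (b p.2 * ν p.2) + (b p.1 * ν p.1) * (a p.2 * ν p.2) := by
    intro p; ring
  rw [tsum_congr h1, ENNReal.tsum_add]
  congr 1
  · rw [ENNReal.tsum_prod (f := fun i i' => a i * ν i * (b i' * ν i'))]
    symm
    calc ∑' (i : ℕ) (i' : ℕ), (a i * ν i) * (b i' * ν i')
        = ∑' (i : ℕ), (a i * ν i) * ∑' i', b i' * ν i' := by
          exact tsum_congr fun i => ENNReal.tsum_mul_left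
      _ = (∑' i, a i * ν i) * (∑' i, b i * ν i) := ENNReal.tsum_mul_right
  · rw [ENNReal.tsum_prod (f := fun i i' => b i * ν i * (a i' * ν i'))]
    symm
    calc ∑' (i : ℕ) (i' : ℕ), (b i * ν i) * (a i' * ν i')
        = ∑' (i : ℕ), (b i * ν i) * ∑' i', a i' * ν i' := by
          exact tsum_congr fun i => ENNReal.tsum_mul_left
      _ = (∑' i, b i * ν i) * (∑' i, a i * ν i) := ENNReal.tsum_mul_right
      _ = (∑' i, a i * ν i) * (∑' i, b i * ν i) := mul_comm _ _

private lemma pt_le (ν a b : ℕ → ENNReal) (ha : Monotone a) (hb : Monotone b) :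
    ∀ p : ℕ × ℕ, (a p.1 * b p.2 + a p.2 * b p.1) * (ν p.1 * ν p.2)
      ≤ (a p.1 * b p.1 + a p.2 * b p.2) * (ν p.1 * ν p.2) := by
  rintro ⟨i, i'⟩
  apply mul_le_mul_left
  rcases le_total i i' with h | h
  · exact rearr_le (ha h) (hb h)
  · have := rearr_le (ha h) (hb h)
    calc a i * b i' + a i' * b i = a i' * b i + a i * b i' := by ring
      _ ≤ a i' * b i' + a i * b i := this
      _ = a i * b i + a i' * b i' := by ring

private lemma cheb_le (ν a b : ℕ → ENNReal) (ha : Monotone a) (hb : Monotone b) :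
    (∑' i, a i * ν i) * (∑' i, b i * ν i) ≤ (∑' i, ν i) * (∑' i, (a i * b i) * ν i) := by
  by_contra hlt
  push_neg at hlt
  have h2 : (∑' i, ν i) * (∑' i, (a i * b i) * ν i) + (∑' i, ν i) * (∑' i, (a i * b i) * ν i)
      < (∑' i, a i * ν i) * (∑' i, b i * ν i) + (∑' i, a i * ν i) * (∑' i, b i * ν i) :=
    ENNReal.add_lt_add hlt hlt
  have h3 := Summable.tsum_le_tsum (pt_le ν a b ha hb) ENNReal.summable ENNReal.summable
  rw [← double_g, ← double_f] at h3
  have h4 : (∑' i, (a i * b i) * ν i) * (∑' i, ν i) = (∑' i, ν i) * (∑' i, (a i * b i) * ν i) :=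
    mul_comm _ _
  rw [h4] at h3
  exact absurd h3 (not_le.mpr h2)

private lemma cheb_eq (ν a b : ℕ → ENNReal) (ha : Monotone a) (hb : Monotone b)
    (hν0 : ∀ i, ν i ≠ 0) (hnutop : ∀ i, ν i ≠ ∞)
    (hA : ∑' i, a i * ν i ≠ ∞) (hB : ∑' i, b i * ν i ≠ ∞)
    (heq : (∑' i, ν i) * (∑' i, (a i * b i) * ν i)
      = (∑' i, a i * ν i) * (∑' i, b i * ν i)) :
    (∀ i, a i = a 0) ∨ (∀ i, b i = b 0) := by
  have hatop : ∀ i, a i ≠ ∞ := by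
    intro i hi
    apply hA
    have h1 : a i * ν i ≤ ∑' i, a i * ν i := ENNReal.le_tsum i
    rw [hi, ENNReal.top_mul (hν0 i)] at h1
    exact top_le_iff.mp h1
  have hbtop : ∀ i, b i ≠ ∞ := by
    intro i hi
    apply hB
    have h1 : b i * ν i ≤ ∑' i, b i * ν i := ENNReal.le_tsum i
    rw [hi, ENNReal.top_mul (hν0 i)] at h1
    exact top_le_iff.mp h1
  -- the two double sums are equal
  have hsum : (∑' p : ℕ × ℕ, (a p.1 * b p.2 + a p.2 * b p.1) * (ν p.1 * ν p.2))
      = ∑' p : ℕ × ℕ, (a p.1 * b p.1 + a p.2 * b p.2) * (ν p.1 * ν p.2) := by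
    rw [← double_g, ← double_f, heq, mul_comm (∑' i, (a i * b i) * ν i) (∑' i, ν i), heq]
  have hgfin : (∑' p : ℕ × ℕ, (a p.1 * b p.2 + a p.2 * b p.1) * (ν p.1 * ν p.2)) ≠ ∞ := by
    rw [← double_g]
    finiteness
  have hpt : ∀ p : ℕ × ℕ, (a p.1 * b p.2 + a p.2 * b p.1) * (ν p.1 * ν p.2)
      = (a p.1 * b p.1 + a p.2 * b p.2) * (ν p.1 * ν p.2) := by
    intro p
    by_contra hne
    have hlt := lt_of_le_of_ne (pt_le ν a b ha hb p) hne
    have := ENNReal.tsum_lt_tsum hgfin (pt_le ν a b ha hb) hlt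
    rw [hsum] at this
    exact lt_irrefl _ this
  have hpair : ∀ i i', i ≤ i' → a i = a i' ∨ b i = b i' := by
    intro i i' hii'
    have h1 := hpt (i, i')
    simp only at h1
    have hc : ν i * ν i' ≠ 0 := mul_ne_zero (hν0 i) (hν0 i')
    have hc' : ν i * ν i' ≠ ∞ := ENNReal.mul_ne_top (hnutop i) (hnutop i')
    have h2 : a i * b i' + a i' * b i = a i * b i + a i' * b i' :=
      (ENNReal.mul_left_inj hc hc').mp h1
    exact rearr_eq (ha hii') (hb hii') (hatop i') (hbtop i') h2
  by_cases hac : ∀ i, a i = a 0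
  · exact Or.inl hac
  · right
    push_neg at hac
    obtain ⟨i₁, hi₁⟩ := hac
    intro m
    set N := max m i₁ with hN
    have haN : a 0 ≠ a N := by
      intro h
      apply hi₁
      have h1 : a i₁ ≤ a N := ha (le_max_right m i₁)
      rw [← h] at h1
      exact le_antisymm h1 (ha (Nat.zero_le i₁))
    have hbN : b 0 = b N := (hpair 0 N (Nat.zero_le N)).resolve_left haN
    exact le_antisymm (hbN ▸ hb (le_max_left m i₁)) (hb (Nat.zero_le m))

private lemma prod_eq_of_le {ι : Type*} (s : Finset ι) (f g : ι → ENNReal)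
    (hle : ∀ j ∈ s, f j ≤ g j) (hf0 : ∀ j ∈ s, f j ≠ 0) (hg : ∀ j ∈ s, g j ≠ ∞)
    (heq : ∏ j ∈ s, f j = ∏ j ∈ s, g j) : ∀ j ∈ s, f j = g j := by
  classical
  induction s using Finset.induction_on with
  | empty => simp
  | insert _ _ hnotmem ih =>
    rename_i c s'
    rw [Finset.prod_insert hnotmem, Finset.prod_insert hnotmem] at heq
    have hPQ : (∏ j ∈ s', f j) ≤ ∏ j ∈ s', g j :=
      Finset.prod_le_prod' fun j hj => hle j (Finset.mem_insert_of_mem hj)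
    have hP0 : (∏ j ∈ s', f j) ≠ 0 :=
      Finset.prod_ne_zero_iff.mpr fun j hj => hf0 j (Finset.mem_insert_of_mem hj)
    have hQtop : (∏ j ∈ s', g j) ≠ ∞ :=
      (ENNReal.prod_lt_top fun j hj => (hg j (Finset.mem_insert_of_mem hj)).lt_top).ne
    have hQ0 : (∏ j ∈ s', g j) ≠ 0 := fun h => hP0 (le_antisymm (h ▸ hPQ) zero_le)
    have hfc0 : f c ≠ 0 := hf0 c (Finset.mem_insert_self c s')
    have hgctop : g c ≠ ∞ := hg c (Finset.mem_insert_self c s')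
    have hfctop : f c ≠ ∞ := fun h => hgctop (top_le_iff.mp (h ▸ hle c (Finset.mem_insert_self c s')))
    have h1 : f c * ∏ j ∈ s', f j ≤ f c * ∏ j ∈ s', g j := mul_le_mul_right hPQ _
    have h2 : f c * ∏ j ∈ s', g j ≤ g c * ∏ j ∈ s', g j :=
      mul_le_mul_left (hle c (Finset.mem_insert_self c s')) _
    have e2 : f c * ∏ j ∈ s', g j = g c * ∏ j ∈ s', g j :=
      le_antisymm h2 (heq ▸ h1)
    have e1 : f c * ∏ j ∈ s', f j = f c * ∏ j ∈ s', g j :=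
      le_antisymm h1 (e2.trans heq.symm).le
    have hfg : f c = g c := (ENNReal.mul_left_inj hQ0 hQtop).mp e2
    have hPQeq : (∏ j ∈ s', f j) = ∏ j ∈ s', g j :=
      (ENNReal.mul_right_inj hfc0 hfctop).mp e1
    intro j hj
    rcases Finset.mem_insert.mp hj with rfl | hj'
    · exact hfg
    · exact ih (fun j hj => hle j (Finset.mem_insert_of_mem hj))
        (fun j hj => hf0 j (Finset.mem_insert_of_mem hj))
        (fun j hj => hg j (Finset.mem_insert_of_mem hj)) hPQeq j hj'


/-- **Discrete Chebyshev-type inequality, equality case** (Lemma 3.2, equality part). Under the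
hypotheses of the discrete inequality, and assuming `0 < ∑_i x_i(j) μ_i < ∞` for every `j`,
equality holds iff at least `k - 1` of the sequences are constant. -/
theorem stmt_5 (k : ℕ) (hk : 1 ≤ k) (x : Fin k → ℕ → ENNReal)
    (hmono : ∀ j, Monotone (x j))
    (μ : ℕ → ℝ) (hμpos : ∀ i, 0 < μ i)
    (hμsum : ∑' i, ENNReal.ofReal (μ i) < ⊤)
    (hpos : ∀ j, 0 < ∑' i, x j i * ENNReal.ofReal (μ i))
    (hfin : ∀ j, ∑' i, x j i * ENNReal.ofReal (μ i) < ⊤) :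
    (∑' i, ENNReal.ofReal (μ i)) ^ (k - 1) *
        ∑' i, (∏ j, x j i) * ENNReal.ofReal (μ i) =
        ∏ j, ∑' i, x j i * ENNReal.ofReal (μ i) ↔
      ∃ j₀ : Fin k, ∀ j ≠ j₀, ∀ i, x j i = x j 0 := by
  classical
  set ν : ℕ → ENNReal := fun i => ENNReal.ofReal (μ i) with hνdef
  have hνi : ∀ i, ENNReal.ofReal (μ i) = ν i := fun _ => rfl
  simp only [hνi] at hμsum hpos hfin ⊢
  have hν0 : ∀ i, ν i ≠ 0 := fun i => by
    rw [hνdef]; simp [ENNReal.ofReal_eq_zero, not_le, hμpos i]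
  have hνtop : ∀ i, ν i ≠ ∞ := fun i => by rw [hνdef]; exact ENNReal.ofReal_ne_top
  have hStop : (∑' i, ν i) ≠ ∞ := hμsum.ne
  have hS0 : (∑' i, ν i) ≠ 0 := by
    intro h
    exact hν0 0 (le_antisymm (le_trans (ENNReal.le_tsum 0) h.le) zero_le)
  have hAtop : ∀ j, (∑' i, x j i * ν i) ≠ ∞ := fun j => (hfin j).ne
  have hA0 : ∀ j, (∑' i, x j i * ν i) ≠ 0 := fun j => (hpos j).ne'
  have hxtop : ∀ j i, x j i ≠ ∞ := by
    intro j i hx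
    apply hAtop j
    have h1 := ENNReal.le_tsum (f := fun i => x j i * ν i) i
    rw [hx, ENNReal.top_mul (hν0 i)] at h1
    exact top_le_iff.mp h1
  constructor
  · -- forward direction
    intro heq
    set sm : ℕ → Finset (Fin k) := fun m => Finset.univ.filter (fun j => (j : ℕ) < m)
      with hsmdef
    set T : ℕ → ENNReal := fun m => ∑' i, (∏ j ∈ sm m, x j i) * ν i with hTdef
    have hsm0 : sm 0 = ∅ := by ext j; simp [hsmdef]
    have hsmk : sm k = Finset.univ := by ext j; simp [hsmdef, j.isLt]
    have hsmsucc : ∀ m (hm : m < k), sm (m + 1) = insert ⟨m, hm⟩ (sm m) := by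
      intro m hm; ext j; simp [hsmdef, Fin.ext_iff]; omega
    have hnotmem : ∀ m (hm : m < k), (⟨m, hm⟩ : Fin k) ∉ sm m := by
      intro m hm; simp [hsmdef]
    have hymono : ∀ m, Monotone (fun i => ∏ j ∈ sm m, x j i) := by
      intro m i i' hii'
      exact Finset.prod_le_prod' fun j _ => hmono j hii'
    have hT0 : T 0 = ∑' i, ν i := by
      rw [hTdef]; simp only [hsm0, Finset.prod_empty, one_mul]
    have hTsucc : ∀ m (hm : m < k),
        T (m + 1) = ∑' i, ((∏ j ∈ sm m, x j i) * x ⟨m, hm⟩ i) * ν i := by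
      intro m hm
      rw [hTdef]; simp only
      apply tsum_congr; intro i
      rw [hsmsucc m hm, Finset.prod_insert (hnotmem m hm)]; ring
    have hstep : ∀ m (hm : m < k),
        T m * (∑' i, x ⟨m, hm⟩ i * ν i) ≤ (∑' i, ν i) * T (m + 1) := by
      intro m hm
      rw [hTsucc m hm, hTdef]; simp only
      exact cheb_le ν (fun i => ∏ j ∈ sm m, x j i) (fun i => x ⟨m, hm⟩ i)
        (hymono m) (hmono _)
    -- endpoints
    have hTk : T k = ∑' i, (∏ j, x j i) * ν i := by
      rw [hTdef]; simp only [hsmk]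
    have hCk : (∑' i, ν i) ^ k * T k = (∑' i, ν i) * ∏ j, ∑' i, x j i * ν i := by
      have hSk : (∑' i, ν i) ^ k = (∑' i, ν i) ^ (k - 1) * (∑' i, ν i) := by
        rw [← pow_succ]; congr 1; omega
      calc (∑' i, ν i) ^ k * T k
          = (∑' i, ν i) * ((∑' i, ν i) ^ (k - 1) * ∑' i, (∏ j, x j i) * ν i) := by
            rw [hSk, hTk]; ring
        _ = (∑' i, ν i) * ∏ j, ∑' i, x j i * ν i := by rw [heq]
    set C : ℕ → ENNReal := fun m =>
      (∑' i, ν i) ^ m * T m * ∏ j ∈ Finset.univ \ sm m, (∑' i, x j i * ν i) with hCdef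
    have hP0 : ∀ s : Finset (Fin k), (∏ j ∈ s, (∑' i, x j i * ν i)) ≠ 0 :=
      fun s => Finset.prod_ne_zero_iff.mpr fun j _ => hA0 j
    have hPtop : ∀ s : Finset (Fin k), (∏ j ∈ s, (∑' i, x j i * ν i)) ≠ ∞ :=
      fun s => (ENNReal.prod_lt_top fun j _ => hfin j).ne
    have hsd : ∀ m (hm : m < k),
        Finset.univ \ sm m = insert ⟨m, hm⟩ (Finset.univ \ sm (m + 1)) := by
      intro m hm; ext j; simp [hsmdef, Fin.ext_iff]; omega
    have hsdnm : ∀ m (hm : m < k), (⟨m, hm⟩ : Fin k) ∉ Finset.univ \ sm (m + 1) := by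
      intro m hm; simp [hsmdef]
    have hCstep : ∀ m (hm : m < k), C m ≤ C (m + 1) := by
      intro m hm
      rw [hCdef]; simp only
      rw [hsd m hm, Finset.prod_insert (hsdnm m hm)]
      calc (∑' i, ν i) ^ m * T m * ((∑' i, x ⟨m, hm⟩ i * ν i) *
              ∏ j ∈ Finset.univ \ sm (m + 1), (∑' i, x j i * ν i))
          = ((∑' i, ν i) ^ m * (T m * (∑' i, x ⟨m, hm⟩ i * ν i))) *
              ∏ j ∈ Finset.univ \ sm (m + 1), (∑' i, x j i * ν i) := by ring
        _ ≤ ((∑' i, ν i) ^ m * ((∑' i, ν i) * T (m + 1))) *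
              ∏ j ∈ Finset.univ \ sm (m + 1), (∑' i, x j i * ν i) :=
            mul_le_mul_left (mul_le_mul_right (hstep m hm) _) _
        _ = (∑' i, ν i) ^ (m + 1) * T (m + 1) *
              ∏ j ∈ Finset.univ \ sm (m + 1), (∑' i, x j i * ν i) := by ring
    have hC0 : C 0 = (∑' i, ν i) * ∏ j, ∑' i, x j i * ν i := by
      rw [hCdef]; simp only [hsm0, Finset.sdiff_empty, pow_zero, one_mul, hT0]
    have hCkk : C k = (∑' i, ν i) * ∏ j, ∑' i, x j i * ν i := by
      rw [hCdef]; simp only [hsmk, Finset.sdiff_self, Finset.prod_empty, mul_one]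
      exact hCk
    have hCmono : ∀ m m', m ≤ m' → m' ≤ k → C m ≤ C m' := by
      intro m m' h
      induction h with
      | refl => intro _; exact le_rfl
      | @step n hn ih =>
        intro hnk
        exact le_trans (ih (by omega)) (hCstep n (by omega))
    have hCeq : ∀ m, m ≤ k → C m = (∑' i, ν i) * ∏ j, ∑' i, x j i * ν i := by
      intro m hm
      refine le_antisymm ?_ ?_
      · rw [← hCkk]; exact hCmono m k hm le_rfl
      · rw [← hC0]; exact hCmono 0 m (Nat.zero_le m) hm
    have hCvtop : ((∑' i, ν i) * ∏ j, ∑' i, x j i * ν i) ≠ ∞ :=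
      ENNReal.mul_ne_top hStop (hPtop _)
    have hCv0 : ((∑' i, ν i) * ∏ j, ∑' i, x j i * ν i) ≠ 0 :=
      mul_ne_zero hS0 (hP0 _)
    have hSm0 : ∀ m, ((∑' i, ν i) ^ m) ≠ 0 := fun m => pow_ne_zero m hS0
    have hSmtop : ∀ m, ((∑' i, ν i) ^ m) ≠ ∞ := fun m => ENNReal.pow_ne_top hStop
    have hTtop : ∀ m, m ≤ k → T m ≠ ∞ := by
      intro m hm hT
      have h1 := hCeq m hm
      rw [hCdef] at h1; simp only at h1
      rw [hT, ENNReal.mul_top (hSm0 m), ENNReal.top_mul (hP0 _)] at h1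
      exact hCvtop h1.symm
    have hTA : ∀ m (hm : m < k),
        T m * (∑' i, x ⟨m, hm⟩ i * ν i) = (∑' i, ν i) * T (m + 1) := by
      intro m hm
      have h1 := hCeq m hm.le
      have h2 := hCeq (m + 1) hm
      rw [hCdef] at h1 h2; simp only at h1 h2
      rw [hsd m hm, Finset.prod_insert (hsdnm m hm)] at h1
      have h3 : ((∑' i, ν i) ^ m * (T m * (∑' i, x ⟨m, hm⟩ i * ν i))) *
            ∏ j ∈ Finset.univ \ sm (m + 1), (∑' i, x j i * ν i)
          = ((∑' i, ν i) ^ m * ((∑' i, ν i) * T (m + 1))) *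
            ∏ j ∈ Finset.univ \ sm (m + 1), (∑' i, x j i * ν i) := by
        calc ((∑' i, ν i) ^ m * (T m * (∑' i, x ⟨m, hm⟩ i * ν i))) *
              ∏ j ∈ Finset.univ \ sm (m + 1), (∑' i, x j i * ν i)
            = (∑' i, ν i) ^ m * T m * ((∑' i, x ⟨m, hm⟩ i * ν i) *
              ∏ j ∈ Finset.univ \ sm (m + 1), (∑' i, x j i * ν i)) := by ring
          _ = (∑' i, ν i) ^ (m + 1) * T (m + 1) *
              ∏ j ∈ Finset.univ \ sm (m + 1), (∑' i, x j i * ν i) := h1.trans h2.symm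
          _ = ((∑' i, ν i) ^ m * ((∑' i, ν i) * T (m + 1))) *
              ∏ j ∈ Finset.univ \ sm (m + 1), (∑' i, x j i * ν i) := by ring
      have h4 := (ENNReal.mul_left_inj (hP0 _) (hPtop _)).mp h3
      exact (ENNReal.mul_right_inj (hSm0 m) (hSmtop m)).mp h4
    have hD : ∀ m (hm : m < k),
        (∀ j ∈ sm m, ∀ i, x j i = x j 0) ∨ (∀ i, x ⟨m, hm⟩ i = x ⟨m, hm⟩ 0) := by
      intro m hm
      have hta := hTA m hm
      rw [hTsucc m hm] at hta
      have hTmtop : (∑' i, (∏ j ∈ sm m, x j i) * ν i) ≠ ∞ := by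
        have := hTtop m hm.le
        rw [hTdef] at this; simpa using this
      have hcheb := cheb_eq ν (fun i => ∏ j ∈ sm m, x j i) (fun i => x ⟨m, hm⟩ i)
        (hymono m) (hmono _) hν0 hνtop hTmtop (hAtop _)
        (by
          rw [hTdef] at hta; simp only at hta
          exact hta.symm)
      rcases hcheb with hy | hx
      · left
        have hy' : ∀ i, (∏ j ∈ sm m, x j i) = ∏ j ∈ sm m, x j 0 := hy
        have hy0 : (∏ j ∈ sm m, x j 0) ≠ 0 := by
          intro h0
          have hTm0 : T m = 0 := by
            rw [hTdef]; simp only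
            exact ENNReal.tsum_eq_zero.mpr fun i => by rw [hy' i, h0, zero_mul]
          have h1 := hCeq m hm.le
          rw [hCdef] at h1; simp only at h1
          rw [hTm0, mul_zero, zero_mul] at h1
          exact hCv0 h1.symm
        intro j hj i
        exact (prod_eq_of_le (sm m) (fun j => x j 0) (fun j => x j i)
          (fun j _ => hmono j (Nat.zero_le i))
          (fun j hj => Finset.prod_ne_zero_iff.mp hy0 j hj)
          (fun j _ => hxtop j i) (hy' i).symm j hj).symm
      · right
        exact hx
    -- assemble
    by_cases hall : ∀ j : Fin k, ∀ i, x j i = x j 0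
    · exact ⟨⟨0, hk⟩, fun j _ => hall j⟩
    · push_neg at hall
      obtain ⟨j₁, i₁, hj₁⟩ := hall
      have htne : (Finset.univ.filter (fun j : Fin k => ¬ ∀ i, x j i = x j 0)).Nonempty := by
        refine ⟨j₁, Finset.mem_filter.mpr ⟨Finset.mem_univ _, ?_⟩⟩
        intro h; exact hj₁ (h i₁)
      refine ⟨(Finset.univ.filter (fun j : Fin k => ¬ ∀ i, x j i = x j 0)).min' htne, ?_⟩
      intro j hj i
      by_contra hji
      have hjt : j ∈ Finset.univ.filter (fun j : Fin k => ¬ ∀ i, x j i = x j 0) :=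
        Finset.mem_filter.mpr ⟨Finset.mem_univ _, fun h => hji (h i)⟩
      have hle := Finset.min'_le _ j hjt
      have hlt : (Finset.univ.filter (fun j : Fin k => ¬ ∀ i, x j i = x j 0)).min' htne < j :=
        lt_of_le_of_ne hle (Ne.symm hj)
      rcases hD j.val j.isLt with hconst | hconst
      · have hmem : (Finset.univ.filter (fun j : Fin k => ¬ ∀ i, x j i = x j 0)).min' htne
            ∈ sm j.val := by
          rw [hsmdef]
          simp only [Finset.mem_filter, Finset.mem_univ, true_and]
          exact hlt
        have hmin_mem := Finset.min'_mem _ htne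
        rw [Finset.mem_filter] at hmin_mem
        exact hmin_mem.2 (hconst _ hmem)
      · exact hji (hconst i)
  · -- backward direction
    rintro ⟨j₀, hc⟩
    have hprodi : ∀ i, (∏ j, x j i)
        = x j₀ i * ∏ j ∈ Finset.univ.erase j₀, x j 0 := by
      intro i
      rw [← Finset.mul_prod_erase Finset.univ (fun j => x j i) (Finset.mem_univ j₀)]
      congr 1
      exact Finset.prod_congr rfl fun j hj => hc j (Finset.mem_erase.mp hj).1 i
    have hT : (∑' i, (∏ j, x j i) * ν i)
        = (∏ j ∈ Finset.univ.erase j₀, x j 0) * ∑' i, x j₀ i * ν i := by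
      rw [tsum_congr (fun i => by rw [hprodi i]; ring :
        ∀ i, (∏ j, x j i) * ν i
          = (∏ j ∈ Finset.univ.erase j₀, x j 0) * (x j₀ i * ν i))]
      exact ENNReal.tsum_mul_left
    have hRHS : (∏ j, ∑' i, x j i * ν i)
        = (∑' i, x j₀ i * ν i) *
          ((∏ j ∈ Finset.univ.erase j₀, x j 0) * (∑' i, ν i) ^ (k - 1)) := by
      rw [← Finset.mul_prod_erase Finset.univ (fun j => ∑' i, x j i * ν i)
        (Finset.mem_univ j₀)]
      congr 1
      have hAj : ∀ j ∈ Finset.univ.erase j₀,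
          (∑' i, x j i * ν i) = x j 0 * ∑' i, ν i := by
        intro j hj
        rw [tsum_congr (fun i => by rw [hc j (Finset.mem_erase.mp hj).1 i] :
          ∀ i, x j i * ν i = x j 0 * ν i)]
        exact ENNReal.tsum_mul_left
      rw [Finset.prod_congr rfl hAj, Finset.prod_mul_distrib, Finset.prod_const]
      congr 2
      rw [Finset.card_erase_of_mem (Finset.mem_univ j₀), Finset.card_univ, Fintype.card_fin]
    rw [hT, hRHS]; ring
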